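/- Let m, n, d, k be nonnegative integers with m + n + 1 ≤ d and 0 ≤ k ≤ n. Let K ⊆ ℝ^d be a finite union of images of subsets of ℝ^m under affine maps, and let h : ℝⁿ → ℝ^d be an affine map injective on [0,1]^k × {0}. For η = (η_{k+1},…,η_n) ∈ (ℝ^d)^{n−k}, let h_η be the affine map agreeing with h at 0 and at the first k standard basis vectors, and sending the j-th standard basis vector to η_j for j > k. Then the set of η for which h_η is injective and h_η([0,1]ⁿ \ ([0,1]^k × {0})) is disjoint from K contains a dense open subset of (ℝ^d)^{n−k}. -/

import Mathlib

open Set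

/-- `f : ℝⁿ → ℝ^d` is an affine map. -/
def IsAffineMapR {n d : ℕ} (f : (Fin n → ℝ) → (Fin d → ℝ)) : Prop :=
  ∃ (L : (Fin n → ℝ) →ₗ[ℝ] (Fin d → ℝ)) (b : Fin d → ℝ), ∀ x, f x = L x + b

/-- The unique affine map with value `v0` at `0` and value `v i` at the `i`-th
standard basis vector. -/
noncomputable def affineFromValues {n d : ℕ} (v0 : Fin d → ℝ) (v : Fin n → Fin d → ℝ) :
    (Fin n → ℝ) → (Fin d → ℝ) :=
  fun x => v0 + ∑ i, x i • (v i - v0)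


section Aux

open Module

lemma exists_near_linearIndependent {Z : Type*} [NormedAddCommGroup Z] [NormedSpace ℝ Z]
    [FiniteDimensional ℝ Z] :
    ∀ (r : ℕ), r ≤ finrank ℝ Z → ∀ (f : Fin r → Z) (ε : ℝ), 0 < ε →
      ∃ g : Fin r → Z, (∀ j, dist (g j) (f j) < ε) ∧ LinearIndependent ℝ g := by
  intro r
  induction r with
  | zero =>
    intro _ f ε hε
    exact ⟨f, fun j => by simpa using hε, linearIndependent_empty_type⟩
  | succ r ih =>
    intro hr f ε hε
    obtain ⟨g₀, hg₀d, hg₀⟩ := ih (le_trans (Nat.le_succ r) hr) (Fin.init f) ε hε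
    have hspan : Submodule.span ℝ (Set.range g₀) ≠ ⊤ := by
      intro htop
      have h1 : finrank ℝ (Submodule.span ℝ (Set.range g₀)) ≤ r :=
        (finrank_range_le_card g₀).trans (by simp)
      rw [htop, finrank_top] at h1
      omega
    have hdense : Dense ((Submodule.span ℝ (Set.range g₀) : Set Z)ᶜ) := by
      rw [← interior_eq_empty_iff_dense_compl]
      by_contra hne
      exact hspan (Submodule.eq_top_of_nonempty_interior' _
        (Set.nonempty_iff_ne_empty.2 hne))
    obtain ⟨v, hv, hvball⟩ := hdense.exists_mem_open Metric.isOpen_ball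
      ⟨f (Fin.last r), Metric.mem_ball_self hε⟩
    refine ⟨Fin.snoc g₀ v, ?_, ?_⟩
    · intro j
      refine Fin.lastCases ?_ ?_ j
      · simpa [Fin.snoc_last] using Metric.mem_ball.1 hvball
      · intro i
        simpa [Fin.snoc_castSucc, Fin.init] using hg₀d i
    · rw [linearIndependent_fin_snoc]
      exact ⟨hg₀, hv⟩

lemma dense_setOf_linearIndependent' {Z : Type*} [NormedAddCommGroup Z] [NormedSpace ℝ Z]
    [FiniteDimensional ℝ Z] {ι : Type*} [Fintype ι]
    (hcard : Fintype.card ι ≤ finrank ℝ Z) :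
    Dense {f : ι → Z | LinearIndependent ℝ f} := by
  rw [Metric.dense_iff]
  intro x r hr
  obtain ⟨g, hgd, hg⟩ := exists_near_linearIndependent _ hcard
    (x ∘ (Fintype.equivFin ι).symm) r hr
  refine ⟨g ∘ (Fintype.equivFin ι), ?_, hg.comp _ (Equiv.injective _)⟩
  rw [Metric.mem_ball, dist_pi_lt_iff hr]
  intro i
  simpa using hgd (Fintype.equivFin ι i)

lemma exists_open_dense_mod {d : ℕ} {ι : Type*} [Fintype ι] (Y : Submodule ℝ (Fin d → ℝ))
    (hY : finrank ℝ Y + Fintype.card ι ≤ d) (p0 : Fin d → ℝ) :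
    ∃ G : Set (ι → Fin d → ℝ), IsOpen G ∧ Dense G ∧
      ∀ η ∈ G, ∀ c : ι → ℝ, (∑ j, c j • (η j - p0)) ∈ Y → c = 0 := by
  obtain ⟨Z, hZ⟩ := Submodule.exists_isCompl Y
  set π := Z.linearProjOfIsCompl Y hZ.symm with hπ
  have hcard : Fintype.card ι ≤ finrank ℝ Z := by
    have hc := Submodule.finrank_add_eq_of_isCompl hZ
    rw [Module.finrank_fin_fun] at hc
    omega
  set T : (ι → Fin d → ℝ) → (ι → Z) := fun η j => π (η j - p0) with hT
  have hTc : Continuous T := continuous_pi fun j =>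
    (π.continuous_of_finiteDimensional).comp ((continuous_apply j).sub continuous_const)
  have hTo : IsOpenMap T := by
    have h1 : T = (fun f : ι → Fin d → ℝ => fun j => π (f j)) ∘
        (fun η => η - Function.const ι p0) := rfl
    rw [h1]
    refine IsOpenMap.comp ?_ (Homeomorph.subRight (Function.const ι p0)).isOpenMap
    have hlin : IsOpenMap ((LinearMap.pi (fun j : ι => π.comp (LinearMap.proj j))
        : (ι → Fin d → ℝ) →ₗ[ℝ] (ι → Z)).toContinuousLinearMap) := by
      apply ContinuousLinearMap.isOpenMap
      intro f
      refine ⟨fun j => (f j : Fin d → ℝ), ?_⟩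
      funext j
      exact Submodule.linearProjOfIsCompl_apply_left hZ.symm (f j)
    exact hlin
  refine ⟨T ⁻¹' {f | LinearIndependent ℝ f}, isOpen_setOf_linearIndependent.preimage hTc,
    (dense_setOf_linearIndependent' hcard).preimage hTo, ?_⟩
  intro η hη c hc
  have hη' : LinearIndependent ℝ (fun j => π (η j - p0)) := hη
  rw [Fintype.linearIndependent_iff] at hη'
  have h0 : π (∑ j, c j • (η j - p0)) = 0 :=
    Submodule.projectionOnto_apply_of_mem_right hZ.symm hc
  rw [map_sum] at h0
  simp only [map_smul] at h0
  funext j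
  exact hη' c h0 j

end Aux

open Module in
/-- Affine transversality: given `m + n + 1 ≤ d`, `k ≤ n`, a set `K ⊆ ℝ^d` which is a
finite union of affine images of subsets of `ℝ^m`, and an affine map `h : ℝⁿ → ℝ^d`
injective on `[0,1]^k × {0}`, the set of parameters `η` (prescribing the values of
an affine perturbation `h_η` at the basis vectors `ξ_{k+1}, …, ξ_n`) for which `h_η`
is injective and `h_η([0,1]ⁿ \ ([0,1]^k × {0})) ∩ K = ∅` contains a dense open set. -/
theorem affine_transversality
    (m n d k : ℕ) (hmnd : m + n + 1 ≤ d) (hkn : k ≤ n)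
    (K : Set (Fin d → ℝ))
    (hK : ∃ (N : ℕ) (g : Fin N → (Fin m → ℝ) → (Fin d → ℝ))
      (S : Fin N → Set (Fin m → ℝ)),
      (∀ i, IsAffineMapR (g i)) ∧ K = ⋃ i, g i '' S i)
    (h : (Fin n → ℝ) → (Fin d → ℝ)) (haff : IsAffineMapR h)
    (hinj : Set.InjOn h
      {x : Fin n → ℝ | (∀ i, x i ∈ Icc (0 : ℝ) 1) ∧ ∀ i : Fin n, k ≤ (i : ℕ) → x i = 0}) :
    ∃ W : Set ({i : Fin n // k ≤ (i : ℕ)} → Fin d → ℝ), IsOpen W ∧ Dense W ∧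
      ∀ η ∈ W,
        Function.Injective
          (affineFromValues (h 0) (fun i : Fin n =>
            if hi : (i : ℕ) < k then h (Pi.single i 1)
            else η ⟨i, Nat.le_of_not_lt hi⟩)) ∧
        (affineFromValues (h 0) (fun i : Fin n =>
            if hi : (i : ℕ) < k then h (Pi.single i 1)
            else η ⟨i, Nat.le_of_not_lt hi⟩)) ''
          ({x : Fin n → ℝ | ∀ i, x i ∈ Icc (0 : ℝ) 1} \
           {x : Fin n → ℝ | (∀ i, x i ∈ Icc (0 : ℝ) 1) ∧
              ∀ i : Fin n, k ≤ (i : ℕ) → x i = 0}) ∩ K = ∅ := by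
  classical
  obtain ⟨N, g, S, hgaff, hKeq⟩ := hK
  subst hKeq
  obtain ⟨L, b, hLb⟩ := haff
  choose Lg bg hLg using hgaff
  have hb0 : h 0 = b := by rw [hLb]; simp
  set u : Fin n → (Fin d → ℝ) := fun i => L (Pi.single i 1) with hu
  -- Claim A : the linear part is injective on the face coordinate subspace
  have claimA : ∀ x : Fin n → ℝ, (∀ i : Fin n, k ≤ (i : ℕ) → x i = 0) → L x = 0 → x = 0 := by
    intro x hx hLx
    set t : ℝ := (1 + ‖x‖)⁻¹ with ht
    have hxnn : (0:ℝ) ≤ ‖x‖ := norm_nonneg x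
    have ht0 : 0 < t := by positivity
    have hbound : ∀ i, |x i| ≤ ‖x‖ := fun i => by
      simpa [Real.norm_eq_abs] using norm_le_pi_norm x i
    set a : Fin n → ℝ := fun i => t * max (x i) 0 with ha
    set c : Fin n → ℝ := fun i => t * max (-(x i)) 0 with hc
    have hub : ∀ s : ℝ, s ≤ ‖x‖ → t * s ≤ 1 := by
      intro s hs
      have h1 : t * s ≤ t * (1 + ‖x‖) := by
        apply mul_le_mul_of_nonneg_left _ ht0.le
        linarith
      have h2 : t * (1 + ‖x‖) = 1 := by
        rw [ht]; field_simp
      linarith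
    have hamem : a ∈ {x : Fin n → ℝ | (∀ i, x i ∈ Icc (0 : ℝ) 1) ∧
        ∀ i : Fin n, k ≤ (i : ℕ) → x i = 0} := by
      constructor
      · intro i
        constructor
        · exact mul_nonneg ht0.le (le_max_right _ 0)
        · exact hub _ ((max_le (le_abs_self _) (abs_nonneg _)).trans (hbound i))
      · intro i hi
        simp [ha, hx i hi]
    have hcmem : c ∈ {x : Fin n → ℝ | (∀ i, x i ∈ Icc (0 : ℝ) 1) ∧
        ∀ i : Fin n, k ≤ (i : ℕ) → x i = 0} := by
      constructor
      · intro i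
        constructor
        · exact mul_nonneg ht0.le (le_max_right _ 0)
        · refine hub _ ((max_le (le_abs_self _) (abs_nonneg _)).trans ?_)
          rw [abs_neg]; exact hbound i
      · intro i hi
        simp [hc, hx i hi]
    have hac : a - c = t • x := by
      funext i
      simp only [Pi.sub_apply, Pi.smul_apply, ha, hc, smul_eq_mul]
      rw [← mul_sub, max_zero_sub_max_neg_zero_eq_self]
    have hhac : h a = h c := by
      rw [hLb, hLb]
      have : L a - L c = 0 := by
        rw [← map_sub, hac, map_smul, hLx, smul_zero]
      have h2 : L a = L c := by rwa [sub_eq_zero] at this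
      rw [h2]
    have haeqc : a = c := hinj hamem hcmem hhac
    funext i
    have h3 : t * max (x i) 0 = t * max (-(x i)) 0 := congrFun haeqc i
    have h4 : max (x i) 0 = max (-(x i)) 0 := mul_left_cancel₀ ht0.ne' h3
    have h5 := max_zero_sub_max_neg_zero_eq_self (x i)
    rw [h4, sub_self] at h5
    exact h5.symm
  -- cardinality bounds
  have hcard : Fintype.card {i : Fin n // k ≤ (i : ℕ)} ≤ n - k := by
    have hinj2 : Function.Injective (fun i : {i : Fin n // k ≤ (i : ℕ)} =>
        (⟨(i : Fin n).val - k, by have := (i : Fin n).isLt; have := i.2; omega⟩ : Fin (n - k))) := by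
      intro i j hij
      have h1 := congrArg Fin.val hij
      simp only at h1
      have h2 := i.2; have h3 := j.2
      apply Subtype.ext; apply Fin.ext; omega
    simpa using Fintype.card_le_of_injective _ hinj2
  have hcardk : Fintype.card {i : Fin n // (i : ℕ) < k} ≤ k := by
    have hinj2 : Function.Injective (fun i : {i : Fin n // (i : ℕ) < k} =>
        (⟨(i : Fin n).val, i.2⟩ : Fin k)) := by
      intro i j hij
      have h1 := congrArg Fin.val hij
      simp only at h1
      apply Subtype.ext; apply Fin.ext; omega
    simpa using Fintype.card_le_of_injective _ hinj2
  set Y₀ : Submodule ℝ (Fin d → ℝ) :=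
    Submodule.span ℝ (Set.range (fun i : {i : Fin n // (i : ℕ) < k} => u i.1)) with hY₀
  have hY₀rank : finrank ℝ Y₀ ≤ k := (finrank_range_le_card _).trans hcardk
  set Ysets : Fin N → Submodule ℝ (Fin d → ℝ) := fun j =>
    Y₀ ⊔ LinearMap.range (Lg j) ⊔ Submodule.span ℝ {bg j - b} with hYsets
  have hYrank : ∀ j, finrank ℝ (Ysets j) + Fintype.card {i : Fin n // k ≤ (i : ℕ)} ≤ d := by
    intro j
    have h1 : finrank ℝ (LinearMap.range (Lg j)) ≤ m :=
      (LinearMap.finrank_range_le (Lg j)).trans (by rw [Module.finrank_fin_fun])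
    have h2 : finrank ℝ (Submodule.span ℝ {bg j - b}) ≤ 1 := by
      rcases eq_or_ne (bg j - b) 0 with h0 | h0
      · rw [h0, Submodule.span_zero_singleton]; simp
      · exact le_of_eq (finrank_span_singleton h0)
    have h3 : finrank ℝ (Ysets j) ≤ k + m + 1 := by
      calc finrank ℝ (Ysets j) ≤ finrank ℝ (Y₀ ⊔ LinearMap.range (Lg j) : Submodule ℝ _)
            + finrank ℝ (Submodule.span ℝ {bg j - b}) :=
          Submodule.finrank_add_le_finrank_add_finrank _ _
        _ ≤ (finrank ℝ Y₀ + finrank ℝ (LinearMap.range (Lg j)))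
            + finrank ℝ (Submodule.span ℝ {bg j - b}) := by
          have := Submodule.finrank_add_le_finrank_add_finrank Y₀ (LinearMap.range (Lg j))
          omega
        _ ≤ k + m + 1 := by omega
    omega
  have hY₀rank' : finrank ℝ Y₀ + Fintype.card {i : Fin n // k ≤ (i : ℕ)} ≤ d := by omega
  obtain ⟨G₀, hG₀o, hG₀d, hG₀⟩ := exists_open_dense_mod Y₀ hY₀rank' b
  have hGj := fun j => exists_open_dense_mod (Ysets j) (hYrank j) b
  choose Gf hGo hGd hGp using hGj
  set A : Option (Fin N) → Set ({i : Fin n // k ≤ (i : ℕ)} → Fin d → ℝ) :=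
    fun o => Option.elim o G₀ Gf with hA
  refine ⟨⋂ o, A o, isOpen_iInter_of_finite (fun o => ?_),
    dense_iInter_of_isOpen (fun o => ?_) (fun o => ?_), ?_⟩
  · cases o with
    | none => exact hG₀o
    | some j => exact hGo j
  · cases o with
    | none => exact hG₀o
    | some j => exact hGo j
  · cases o with
    | none => exact hG₀d
    | some j => exact hGd j
  intro η hη
  have hη₀ : η ∈ G₀ := mem_iInter.1 hη none
  have hηj : ∀ j, η ∈ Gf j := fun j => mem_iInter.1 hη (some j)
  set v : Fin n → (Fin d → ℝ) := fun i =>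
    if hi : (i : ℕ) < k then h (Pi.single i 1) else η ⟨i, Nat.le_of_not_lt hi⟩ with hv
  have hLxc : ∀ c : Fin n → ℝ, L (fun i => if (i : ℕ) < k then c i else 0)
      = ∑ i ∈ Finset.univ.filter (fun i : Fin n => (i : ℕ) < k), c i • u i := by
    intro c
    have hx : (fun i : Fin n => if (i : ℕ) < k then c i else 0)
        = ∑ i ∈ Finset.univ.filter (fun i : Fin n => (i : ℕ) < k), c i • (Pi.single i 1 : Fin n → ℝ) := by
      funext j
      rw [Finset.sum_apply]
      simp only [Pi.smul_apply, Pi.single_apply, smul_eq_mul, mul_ite, mul_one, mul_zero]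
      rw [Finset.sum_ite_eq (Finset.univ.filter (fun i : Fin n => (i : ℕ) < k)) j (fun i => c i)]
      simp
    rw [hx, map_sum]
    apply Finset.sum_congr rfl
    intro i _
    rw [map_smul]
  have hsum : ∀ c : Fin n → ℝ, ∑ i, c i • (v i - b) =
      L (fun i => if (i : ℕ) < k then c i else 0)
        + ∑ j : {i : Fin n // k ≤ (i : ℕ)}, c j • (η j - b) := by
    intro c
    rw [← Finset.sum_filter_add_sum_filter_not Finset.univ (fun i : Fin n => (i : ℕ) < k)
      (fun i => c i • (v i - b))]
    congr 1
    · rw [hLxc]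
      apply Finset.sum_congr rfl
      intro i hi
      have hik : (i : ℕ) < k := (Finset.mem_filter.1 hi).2
      have hvi : v i = h (Pi.single i 1) := by rw [hv]; exact dif_pos hik
      rw [hvi, hLb]
      simp [hu]
    · rw [Finset.sum_subtype (p := fun i : Fin n => k ≤ (i : ℕ))
        (Finset.univ.filter (fun i : Fin n => ¬ (i : ℕ) < k))
        (by intro x; simp [not_lt]) (fun i => c i • (v i - b))]
      apply Finset.sum_congr rfl
      intro j _
      have hvj : v (j : Fin n) = η j := by
        simp only [hv]
        simp only [dif_neg (not_lt.2 j.2)]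
      rw [hvj]
  -- the key joint-independence statement
  have key : ∀ c : Fin n → ℝ, ∑ i, c i • (v i - b) = 0 → c = 0 := by
    intro c hcsum
    rw [hsum] at hcsum
    set xc : Fin n → ℝ := fun i => if (i : ℕ) < k then c i else 0 with hxc
    have hmemY₀ : L xc ∈ Y₀ := by
      rw [hLxc]
      apply Submodule.sum_mem
      intro i hi
      apply Submodule.smul_mem
      apply Submodule.subset_span
      exact ⟨⟨i, (Finset.mem_filter.1 hi).2⟩, rfl⟩
    have hsumY₀ : (∑ j : {i : Fin n // k ≤ (i : ℕ)}, c j • (η j - b)) ∈ Y₀ := by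
      have heq : (∑ j : {i : Fin n // k ≤ (i : ℕ)}, c j • (η j - b)) = -(L xc) := by
        linear_combination hcsum
      rw [heq]
      exact Submodule.neg_mem _ hmemY₀
    have hczero : (fun j : {i : Fin n // k ≤ (i : ℕ)} => c j) = 0 :=
      hG₀ η hη₀ _ hsumY₀
    have hsum0 : (∑ j : {i : Fin n // k ≤ (i : ℕ)}, c j • (η j - b)) = 0 :=
      Finset.sum_eq_zero fun j _ => by
        have : c j = 0 := congrFun hczero j
        rw [this, zero_smul]
    have hLxc0 : L xc = 0 := by
      rw [hsum0, add_zero] at hcsum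
      exact hcsum
    have hxczero : xc = 0 := claimA xc (fun i hi => by simp [hxc, not_lt.2 hi]) hLxc0
    funext i
    by_cases hik : (i : ℕ) < k
    · have := congrFun hxczero i
      rw [hxc] at this
      simpa [hik] using this
    · exact congrFun hczero ⟨i, Nat.le_of_not_lt hik⟩
  constructor
  · -- injectivity
    intro x y hxy
    simp only [affineFromValues, hb0] at hxy
    have hdiff : ∑ i, (x i - y i) • (v i - b) = 0 := by
      have h1 := add_left_cancel hxy
      have h2 : ∑ i, (x i - y i) • (v i - b)
          = (∑ i, x i • (v i - b)) - (∑ i, y i • (v i - b)) := by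
        rw [← Finset.sum_sub_distrib]
        apply Finset.sum_congr rfl
        intro i _
        rw [sub_smul]
      rw [h2, h1, sub_self]
    have := key _ hdiff
    funext i
    have h3 := congrFun this i
    simpa [sub_eq_zero] using h3
  · -- disjointness
    rw [Set.eq_empty_iff_forall_notMem]
    rintro z ⟨⟨x, ⟨hx1, hx2⟩, rfl⟩, hzK⟩
    obtain ⟨j, hj⟩ := Set.mem_iUnion.1 hzK
    obtain ⟨s, _, hgs⟩ := hj
    have hx2' : ∃ i : Fin n, k ≤ (i : ℕ) ∧ x i ≠ 0 := by
      by_contra hcon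
      push_neg at hcon
      exact hx2 ⟨hx1, fun i hi => hcon i hi⟩
    obtain ⟨i₀, hi₀, hxi₀⟩ := hx2'
    rw [hLg j] at hgs
    simp only [affineFromValues, hb0] at hgs
    rw [hsum x] at hgs
    set xc : Fin n → ℝ := fun i => if (i : ℕ) < k then x i else 0 with hxc
    have hmemY₀ : L xc ∈ Y₀ := by
      rw [hLxc]
      apply Submodule.sum_mem
      intro i hi
      apply Submodule.smul_mem
      apply Submodule.subset_span
      exact ⟨⟨i, (Finset.mem_filter.1 hi).2⟩, rfl⟩
    have hmem : (∑ jj : {i : Fin n // k ≤ (i : ℕ)}, x jj • (η jj - b)) ∈ Ysets j := by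
      have h2 : (∑ jj : {i : Fin n // k ≤ (i : ℕ)}, x jj • (η jj - b))
          = Lg j s + (bg j - b) + (-(L xc)) := by
        linear_combination -hgs
      rw [h2]
      refine Submodule.add_mem _ (Submodule.add_mem _ ?_ ?_) ?_
      · exact Submodule.mem_sup_left (Submodule.mem_sup_right (LinearMap.mem_range_self _ s))
      · exact Submodule.mem_sup_right (Submodule.mem_span_singleton_self _)
      · exact Submodule.neg_mem _
          (Submodule.mem_sup_left (Submodule.mem_sup_left hmemY₀))
    have hzero := hGp j η (hηj j) _ hmem
    exact hxi₀ (congrFun hzero ⟨i₀, hi₀⟩)
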